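/- arXiv:2009.05986 — 5 statements merged into one kernel-verified Lean document; each statement's English description precedes it below -/
import Mathlib

section
/- Let S be a finite set, P, P̄ : S → [0,1] with ∑_s P(s) = ∑_s P̄(s) = 1, and suppose P̄(s) − W(s) ≤ P(s) for all s ∈ S, where W : S → [0,∞) with W(s) ≤ P̄(s). Define the 'optimistic' distribution P̃(s) = P̄(s) − W(s) + 1{s = s*} · ∑_{s'} W(s'), where s* ∈ argmax_{s ∈ S} h(s) for a given vector h : S → ℝ. Then ∑_{s ∈ S} P̃(s) h(s) ≥ ∑_{s ∈ S} P(s) h(s). -/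
/-- The optimistic distribution, which moves all slack mass toward a maximizer of h,
dominates any pointwise-dominating distribution P in expectation of h. -/
theorem optimistic_distribution_dominates
    (S : Type) [Fintype S] [DecidableEq S]
    (P Pbar W : S → ℝ) (h : S → ℝ) (sstar : S)
    (hP0 : ∀ s, 0 ≤ P s) (hP1 : ∑ s, P s = 1)
    (hPbar0 : ∀ s, 0 ≤ Pbar s) (hPbar1 : ∑ s, Pbar s = 1)
    (hW0 : ∀ s, 0 ≤ W s) (hWle : ∀ s, W s ≤ Pbar s)
    (hdom : ∀ s, Pbar s - W s ≤ P s)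
    (hstar : ∀ s, h s ≤ h sstar) :
    ∑ s, P s * h s ≤
      ∑ s, (Pbar s - W s + (if s = sstar then ∑ s', W s' else 0)) * h s := by
  have hD : ∑ s, (P s - (Pbar s - W s)) = ∑ s, W s := by
    simp [Finset.sum_sub_distrib, hP1, hPbar1]
  have key : ∑ s, (P s - (Pbar s - W s)) * h s ≤ (∑ s, W s) * h sstar := by
    rw [← hD, Finset.sum_mul]
    apply Finset.sum_le_sum
    intro s _
    exact mul_le_mul_of_nonneg_left (hstar s) (by linarith [hdom s])
  have expand : ∑ s, (Pbar s - W s + (if s = sstar then ∑ s', W s' else 0)) * h s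
      = ∑ s, (Pbar s - W s) * h s + (∑ s', W s') * h sstar := by
    simp only [add_mul, Finset.sum_add_distrib, ite_mul, zero_mul]
    simp [Finset.sum_ite_eq']
  rw [expand]
  have : ∑ s, P s * h s = ∑ s, (Pbar s - W s) * h s + ∑ s, (P s - (Pbar s - W s)) * h s := by
    rw [← Finset.sum_add_distrib]; congr 1; ext s; ring
  linarith
end

section
/- Let S be a finite set, ρ : S → [0,1] a stationary distribution of a Markov chain with transition kernel P̃ on S (i.e., ∑_s ρ(s) = 1 and ρ(s') = ∑_s ρ(s) P̃(s'|s) for all s'). Let r̃, r : S → [0,1] with r̃(s) ≥ r(s) for all s, and let λ*, h : S → ℝ satisfy the Bellman equations h(s) + λ* = r(s) + ∑_{s'} P(s'|s) h(s') for a kernel P on S. If ∑_{s'} (P̃(s'|s) − P(s'|s)) h(s') ≥ 0 for all s, then ∑_s ρ(s) r̃(s) ≥ λ*. -/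
/-- Optimism: if the optimistic reward dominates the true reward and the optimistic
kernel dominates the true kernel in the bias vector, then the average optimistic
reward under any stationary distribution of the optimistic chain is at least λ*. -/
theorem optimism_gain_bound
    (S : Type) [Fintype S]
    (ρ rtilde r h : S → ℝ) (P Ptilde : S → S → ℝ) (lam : ℝ)
    (hρ0 : ∀ s, 0 ≤ ρ s) (hρ1 : ∑ s, ρ s = 1)
    (hstat : ∀ s', ρ s' = ∑ s, ρ s * Ptilde s s')
    (hr : ∀ s, r s ≤ rtilde s)
    (hBell : ∀ s, h s + lam = r s + ∑ s', P s s' * h s')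
    (hdom : ∀ s, 0 ≤ ∑ s', (Ptilde s s' - P s s') * h s') :
    lam ≤ ∑ s, ρ s * rtilde s := by
  have hswap : ∑ s, ρ s * h s = ∑ s, ρ s * ∑ s', Ptilde s s' * h s' := by
    calc ∑ s', ρ s' * h s' = ∑ s', (∑ s, ρ s * Ptilde s s') * h s' := by
          simp_rw [← hstat]
      _ = ∑ s', ∑ s, ρ s * Ptilde s s' * h s' := by
          simp_rw [Finset.sum_mul]
      _ = ∑ s, ρ s * ∑ s', Ptilde s s' * h s' := by
          rw [Finset.sum_comm]; simp_rw [Finset.mul_sum, mul_assoc]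
  have hrep : ∑ s, ρ s * r s
      = lam + ∑ s, ρ s * ∑ s', (Ptilde s s' - P s s') * h s' := by
    have : ∀ s, ρ s * r s = ρ s * lam + ρ s * h s - ρ s * ∑ s', P s s' * h s' := by
      intro s
      linear_combination (-ρ s) * hBell s
    have hA : ∑ s, ρ s * ∑ s', (Ptilde s s' - P s s') * h s'
        = (∑ s, ρ s * ∑ s', Ptilde s s' * h s') - ∑ s, ρ s * ∑ s', P s s' * h s' := by
      rw [← Finset.sum_sub_distrib]
      refine Finset.sum_congr rfl fun s _ => ?_
      rw [← mul_sub, ← Finset.sum_sub_distrib]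
      congr 1
      exact Finset.sum_congr rfl fun s' _ => by ring
    rw [hA, ← hswap]
    simp_rw [this]
    rw [Finset.sum_sub_distrib, Finset.sum_add_distrib, ← Finset.sum_mul, hρ1]
    ring
  have h1 : lam ≤ ∑ s, ρ s * r s := by
    rw [hrep]
    have : 0 ≤ ∑ s, ρ s * ∑ s', (Ptilde s s' - P s s') * h s' :=
      Finset.sum_nonneg fun s _ => mul_nonneg (hρ0 s) (hdom s)
    linarith
  exact h1.trans (Finset.sum_le_sum fun s _ => mul_le_mul_of_nonneg_left (hr s) (hρ0 s))
end

section
/- Let N₁, ..., N_K be nonnegative integers representing episode lengths with ∑_{k=1}^K N_k = T, and suppose each episode ends when the cumulative count doubles: N_k ≤ max{∑_{j<k} N_j, 1} for all k. Then ∑_{k=1}^K N_k / √(max{∑_{j<k} N_j, 1}) ≤ (√2 + 1) √T. -/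
open Finset

lemma key_step (a n : ℝ) (ha : 0 ≤ a) (hn : 0 ≤ n) (h : n ≤ max a 1) :
    n / Real.sqrt (max a 1) ≤ (Real.sqrt 2 + 1) * (Real.sqrt (a + n) - Real.sqrt a) := by
  set m := max a 1 with hm
  have hm1 : (1:ℝ) ≤ m := le_max_right _ _
  have hm0 : (0:ℝ) < m := by linarith
  have ham : a ≤ m := le_max_left _ _
  have hsm : 0 < Real.sqrt m := Real.sqrt_pos.2 hm0
  have h1 : Real.sqrt (a + n) ≤ Real.sqrt 2 * Real.sqrt m := by
    rw [← Real.sqrt_mul (by norm_num)]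
    exact Real.sqrt_le_sqrt (by linarith)
  have h2 : Real.sqrt a ≤ Real.sqrt m := Real.sqrt_le_sqrt ham
  have e1 : Real.sqrt (a + n) ^ 2 = a + n := Real.sq_sqrt (by linarith)
  have e2 : Real.sqrt a ^ 2 = a := Real.sq_sqrt ha
  have hd : 0 ≤ Real.sqrt (a + n) - Real.sqrt a :=
    sub_nonneg.2 (Real.sqrt_le_sqrt (by linarith))
  rw [div_le_iff₀ hsm]
  nlinarith [mul_le_mul_of_nonneg_left (add_le_add h1 h2) hd]

lemma aux_sum (f : ℕ → ℕ) (K : ℕ)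
    (hdbl : ∀ k < K, f k ≤ max (∑ j ∈ Finset.range k, f j) 1) :
    ∑ k ∈ Finset.range K,
        (f k : ℝ) / Real.sqrt ((max (∑ j ∈ Finset.range k, f j) 1 : ℕ) : ℝ)
      ≤ (Real.sqrt 2 + 1) * Real.sqrt ((∑ k ∈ Finset.range K, f k : ℕ) : ℝ) := by
  induction K with
  | zero => simp
  | succ K ih =>
    rw [Finset.sum_range_succ, Finset.sum_range_succ (fun k => f k)]
    have h1 := ih (fun k hk => hdbl k (by omega))
    have hd := hdbl K (by omega)
    set S : ℕ := ∑ j ∈ Finset.range K, f j with hS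
    have hcast : ((max S 1 : ℕ) : ℝ) = max (S : ℝ) 1 := by
      push_cast; simp [Nat.cast_max]
    have hk := key_step (S : ℝ) (f K) (Nat.cast_nonneg _) (Nat.cast_nonneg _)
      (by rw [← hcast]; exact_mod_cast hd)
    have hc2 : ((S + f K : ℕ) : ℝ) = (S : ℝ) + (f K : ℝ) := by push_cast; ring
    rw [hc2]
    rw [hcast] at *
    linarith

/-- Doubling-trick summation bound (Lemma 19 of Jaksch et al.). -/
theorem doubling_sum_sqrt_bound (K T : ℕ) (N : Fin K → ℕ)
    (hsum : ∑ k, N k = T)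
    (hdbl : ∀ k : Fin K, N k ≤ max (∑ j ∈ Finset.univ.filter (fun j => j < k), N j) 1) :
    ∑ k, (N k : ℝ) / Real.sqrt ((max (∑ j ∈ Finset.univ.filter (fun j => j < k), N j) 1 : ℕ) : ℝ) ≤
      (Real.sqrt 2 + 1) * Real.sqrt T := by
  classical
  set f : ℕ → ℕ := fun i => if h : i < K then N ⟨i, h⟩ else 0 with hf
  have hfN : ∀ i : Fin K, f i.val = N i := by
    intro i; simp [hf, i.isLt]
  have hfilter : ∀ k : Fin K,
      ∑ j ∈ Finset.univ.filter (fun j => j < k), N j = ∑ j ∈ Finset.range k.val, f j := by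
    intro k
    rw [Finset.sum_filter]
    have h1 : ∀ i : Fin K, (if i < k then N i else 0) =
        (fun j => if j < k.val then f j else 0) i.val := by
      intro i
      simp only [Fin.lt_def, hfN]
    rw [Finset.sum_congr rfl (fun i _ => h1 i), Fin.sum_univ_eq_sum_range (fun j => if j < k.val then f j else 0) K]
    rw [← Finset.sum_subset (Finset.range_subset_range.2 k.isLt.le)
        (fun x _ hx => by simp [Nat.not_lt.1 (fun h => hx (Finset.mem_range.2 h))])]
    exact Finset.sum_congr rfl (fun i hi => by simp [Finset.mem_range.1 hi])
  have htot : ∑ k ∈ Finset.range K, f k = T := by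
    rw [← hsum, ← Fin.sum_univ_eq_sum_range]
    exact Finset.sum_congr rfl (fun i _ => hfN i)
  have hmain := aux_sum f K (by
    intro k hk
    have := hdbl ⟨k, hk⟩
    rw [hfilter ⟨k, hk⟩] at this
    simpa [hfN ⟨k, hk⟩] using this)
  rw [htot] at hmain
  have heq : ∀ k : Fin K,
      (N k : ℝ) / Real.sqrt ((max (∑ j ∈ Finset.univ.filter (fun j => j < k), N j) 1 : ℕ) : ℝ)
      = (fun i => (f i : ℝ) /
          Real.sqrt ((max (∑ j ∈ Finset.range i, f j) 1 : ℕ) : ℝ)) k.val := by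
    intro k
    simp only [hfilter k, hfN k]
  rw [Finset.sum_congr rfl (fun k _ => heq k), Fin.sum_univ_eq_sum_range (fun i => (f i : ℝ) / Real.sqrt ((max (∑ j ∈ Finset.range i, f j) 1 : ℕ) : ℝ)) K]
  exact hmain
end

section
/- Let N₁, ..., N_K be positive integers with ∑_{k=1}^K N_k = T and N_k ≤ max{∑_{j<k} N_j, 1} for each k (the doubling episode condition). Then ∑_{k=1}^K N_k / max{∑_{j<k} N_j, 1} ≤ C · (log₂ T + 1) for some absolute constant C (one may take C = 2). -/
open Finset

lemma log_one_add_ge (t : ℝ) (h0 : 0 ≤ t) (h1 : t ≤ 1) :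
    t ≤ Real.logb 2 (1 + t) := by
  have hc := strictConcaveOn_log_Ioi.concaveOn.2 (Set.mem_Ioi.2 (one_pos (α := ℝ)))
    (Set.mem_Ioi.2 (two_pos (α := ℝ))) (by linarith : (0:ℝ) ≤ 1 - t) h0 (by ring)
  simp only [smul_eq_mul, Real.log_one, mul_zero, mul_one, zero_add] at hc
  have h2 : 1 - t + t * 2 = 1 + t := by ring
  rw [h2] at hc
  rw [Real.logb, le_div_iff₀ (Real.log_pos one_lt_two)]
  linarith

lemma ratio_le_log_step (M g : ℕ) (hM : 1 ≤ M) (hg : g ≤ M) :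
    (g : ℝ) / M ≤ Real.logb 2 (M + g) - Real.logb 2 M := by
  have hM0 : (0:ℝ) < M := by exact_mod_cast hM
  have ht0 : (0:ℝ) ≤ (g:ℝ)/M := by positivity
  have ht1 : (g:ℝ)/M ≤ 1 := by
    rw [div_le_one hM0]; exact_mod_cast hg
  have key := log_one_add_ge _ ht0 ht1
  have h1 : (1 : ℝ) + (g:ℝ)/M = ((M:ℝ) + g)/M := by field_simp
  rw [h1, Real.logb, Real.log_div (by positivity) (ne_of_gt hM0)] at key
  rw [Real.logb, Real.logb, div_sub_div_same]
  exact key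

lemma doubling_aux (g : ℕ → ℕ) : ∀ K : ℕ,
    (∀ i < K, g i ≤ max (∑ j ∈ range i, g j) 1) →
    ∑ i ∈ range K, (g i : ℝ) / ((max (∑ j ∈ range i, g j) 1 : ℕ) : ℝ) ≤
      Real.logb 2 ((max (∑ j ∈ range K, g j) 1 : ℕ)) + ((min (∑ j ∈ range K, g j) 1 : ℕ) : ℝ) := by
  intro K
  induction K with
  | zero => simp
  | succ K ih =>
    intro h
    have ih' := ih (fun i hi => h i (Nat.lt_succ_of_lt hi))
    have hgK := h K (Nat.lt_succ_self K)
    rw [Finset.sum_range_succ, Finset.sum_range_succ]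
    rcases Nat.eq_zero_or_pos (∑ j ∈ range K, g j) with h0 | h1
    · rw [h0] at hgK ih' ⊢
      simp only [Nat.max_eq_right (Nat.zero_le 1), Nat.zero_add] at hgK ih' ⊢
      have hlog1 : Real.logb 2 (((1:ℕ) : ℝ)) = 0 := by norm_num
      rw [hlog1] at ih'
      simp only [Nat.min_eq_left (Nat.zero_le 1), Nat.cast_zero, add_zero, Nat.cast_one,
        div_one] at ih' ⊢
      interval_cases hgk : g K
      · norm_num
        simpa using ih'
      · simp only [Nat.max_self, Nat.min_self, Nat.cast_one, Real.logb_one]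
        linarith
    · have hmax : max (∑ j ∈ range K, g j) 1 = ∑ j ∈ range K, g j := Nat.max_eq_left h1
      have hle : 1 ≤ (∑ j ∈ range K, g j) + g K := le_trans h1 (Nat.le_add_right _ _)
      have hmax' : max ((∑ j ∈ range K, g j) + g K) 1 = (∑ j ∈ range K, g j) + g K :=
        Nat.max_eq_left hle
      have hmin : min ((∑ j ∈ range K, g j) + g K) 1 = 1 := Nat.min_eq_right hle
      have hmin' : min (∑ j ∈ range K, g j) 1 = 1 := Nat.min_eq_right h1
      rw [hmax] at hgK
      rw [hmax, hmin'] at ih'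
      rw [hmax, hmax', hmin]
      have hstep := ratio_le_log_step (∑ j ∈ range K, g j) (g K) h1 hgK
      rw [Nat.cast_add] at *
      linarith

/-- Logarithmic bound on the sum of ratios of in-episode visits to prior counts
under the doubling episode condition (with constant C = 2). -/
theorem doubling_sum_ratio_log_bound (K T : ℕ) (N : Fin K → ℕ)
    (hpos : ∀ k, 0 < N k)
    (hsum : ∑ k, N k = T)
    (hdbl : ∀ k : Fin K, N k ≤ max (∑ j ∈ Finset.univ.filter (fun j => j < k), N j) 1) :
    ∑ k, (N k : ℝ) / ((max (∑ j ∈ Finset.univ.filter (fun j => j < k), N j) 1 : ℕ) : ℝ) ≤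
      2 * (Real.logb 2 T + 1) := by
  classical
  set g : ℕ → ℕ := fun i => if h : i < K then N ⟨i, h⟩ else 0 with hg
  have hfilter : ∀ k : Fin K, ∑ j ∈ Finset.univ.filter (fun j => j < k), N j
      = ∑ j ∈ range k.val, g j := by
    intro k
    rw [Finset.sum_filter]
    have step1 : (∑ a : Fin K, if a < k then N a else 0)
        = ∑ a : Fin K, (fun i : ℕ => if i < k.val then g i else 0) a.val := by
      apply Finset.sum_congr rfl
      intro a _
      simp only [hg, Fin.lt_def, a.isLt, dite_true, Fin.eta]
    rw [step1, Fin.sum_univ_eq_sum_range (fun i : ℕ => if i < k.val then g i else 0)]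
    rw [← Finset.sum_subset (Finset.range_subset_range.2 k.isLt.le)]
    · apply Finset.sum_congr rfl
      intro i hi
      simp [Finset.mem_range.1 hi]
    · intro i _ hi
      rw [if_neg (fun h => hi (Finset.mem_range.2 h))]
  have hgval : ∀ k : Fin K, g k.val = N k := by
    intro k
    simp only [hg, k.isLt, dite_true, Fin.eta]
  have hT : ∑ j ∈ range K, g j = T := by
    rw [← hsum, ← Fin.sum_univ_eq_sum_range (fun i => g i)]
    exact Finset.sum_congr rfl (fun k _ => hgval k)
  have haux := doubling_aux g K (by
    intro i hi
    have := hdbl ⟨i, hi⟩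
    rw [hfilter ⟨i, hi⟩] at this
    simpa [hgval ⟨i, hi⟩] using this)
  have hLHS : ∑ k, (N k : ℝ) / ((max (∑ j ∈ Finset.univ.filter (fun j => j < k), N j) 1 : ℕ) : ℝ)
      = ∑ i ∈ range K, (g i : ℝ) / ((max (∑ j ∈ range i, g j) 1 : ℕ) : ℝ) := by
    rw [← Fin.sum_univ_eq_sum_range (fun i => (g i : ℝ) / ((max (∑ j ∈ range i, g j) 1 : ℕ) : ℝ))]
    apply Finset.sum_congr rfl
    intro k _
    rw [hfilter k, hgval k]
  rw [hLHS, hT] at *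
  rcases Nat.eq_zero_or_pos T with h0 | h1
  · rw [h0] at haux ⊢
    norm_num at haux ⊢
    calc _ ≤ (0:ℝ) := haux
    _ ≤ 2 := by norm_num
  · have hmax : max T 1 = T := Nat.max_eq_left h1
    have hmin : min T 1 = 1 := Nat.min_eq_right h1
    rw [hmax, hmin] at haux
    have hlogT : 0 ≤ Real.logb 2 T :=
      Real.logb_nonneg one_lt_two (by exact_mod_cast h1)
    rw [Nat.cast_one] at haux
    linarith
end

section
/- Let X₁, X₂, ... be i.i.d. Bernoulli random variables with mean p, and for n ≥ 1 let p̄_n = (1/n) ∑_{i=1}^n X_i. Fix δ ∈ (0,1). Then with probability at least 1 − δ, for all n ≥ 1 simultaneously: |p̄_n − p| ≤ √(18 p̄_n log(6n/δ) / n) + 18 log(6n/δ) / n. -/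
set_option maxHeartbeats 1000000

open MeasureTheory ProbabilityTheory Real Finset

section Helpers

lemma aux_sqrt_le {a b : ℝ} (hb : 0 ≤ b) (h : a ≤ b ^ 2) : Real.sqrt a ≤ b :=
  Real.sqrt_le_iff.mpr ⟨hb, h⟩

lemma aux_sqrt_add {a b : ℝ} (ha : 0 ≤ a) (hb : 0 ≤ b) :
    Real.sqrt (a + b) ≤ Real.sqrt a + Real.sqrt b := by
  apply aux_sqrt_le (by positivity)
  have h1 := Real.sq_sqrt ha
  have h2 := Real.sq_sqrt hb
  nlinarith [Real.sqrt_nonneg a, Real.sqrt_nonneg b]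

lemma aux_exp_quad {t : ℝ} (ht : |t| ≤ 1) : Real.exp t ≤ 1 + t + t ^ 2 := by
  have h := Real.exp_bound ht (by norm_num : 0 < 2)
  simp [Finset.sum_range_succ] at h
  rw [abs_le] at h
  nlinarith [sq_abs t, h.1, h.2]

lemma partial_basel (N : ℕ) : ∑ m ∈ Finset.range (N+1), (1:ℝ)/((m:ℝ)+1)^2 ≤ 2 - 1/((N:ℝ)+1) := by
  induction N with
  | zero => norm_num
  | succ N ih =>
    rw [Finset.sum_range_succ]
    push_cast
    have h1 : (0:ℝ) < (N:ℝ)+1 := by positivity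
    have h2 : (0:ℝ) < (N:ℝ)+2 := by positivity
    have key : 1/((N:ℝ)+1+1)^2 ≤ 1/((N:ℝ)+1) - 1/((N:ℝ)+1+1) := by
      rw [div_sub_div _ _ (ne_of_gt h1) (by positivity),
        div_le_div_iff₀ (by positivity) (by positivity)]
      nlinarith
    push_cast at ih ⊢
    linarith

lemma partial_basel' (N : ℕ) : ∑ m ∈ Finset.range N, (1:ℝ)/((m:ℝ)+1)^2 ≤ 2 := by
  cases N with
  | zero => norm_num
  | succ N =>
    have h1 : (0:ℝ) < (N:ℝ)+1 := by positivity
    have h2 : (0:ℝ) ≤ 1/((N:ℝ)+1) := by positivity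
    linarith [partial_basel N]

lemma conv_lemma {p q s : ℝ} (hp : 0 ≤ p) (hq : 0 ≤ q) (hs : 0 ≤ s)
    (h : |q - p| ≤ Real.sqrt (8*p*s) + 4*s) : |q - p| ≤ Real.sqrt (18*q*s) + 18*s := by
  have h1 : Real.sqrt (8*p*s) ≤ p/4 + 8*s :=
    aux_sqrt_le (by positivity) (by nlinarith [sq_nonneg (p/4 - 8*s)])
  have hp' : p ≤ (4/3)*q + 16*s := by
    have := (abs_le.mp h).2
    linarith [(abs_le.mp h).1]
  have h2 : (8:ℝ)*p*s ≤ (32/3)*q*s + 128*s^2 := by nlinarith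
  have h3 : Real.sqrt (8*p*s) ≤ Real.sqrt ((32/3)*q*s) + Real.sqrt (128*s^2) :=
    (Real.sqrt_le_sqrt h2).trans (aux_sqrt_add (by positivity) (by positivity))
  have h4 : Real.sqrt ((32/3)*q*s) ≤ Real.sqrt (18*q*s) := Real.sqrt_le_sqrt (by nlinarith)
  have h5 : Real.sqrt (128*s^2) ≤ 12*s := aux_sqrt_le (by positivity) (by nlinarith)
  linarith

lemma aux_integrable_of_bounded {Ω : Type} [MeasurableSpace Ω] {μ : Measure Ω}
    [IsProbabilityMeasure μ] {f : Ω → ℝ} (hm : Measurable f) (C : ℝ)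
    (hb : ∀ ω, |f ω| ≤ C) : Integrable f μ := by
  refine Integrable.mono' (integrable_const C) hm.aestronglyMeasurable ?_
  filter_upwards with ω using hb ω

lemma bern_mgf {Ω : Type} [MeasurableSpace Ω] (μ : Measure Ω) [IsProbabilityMeasure μ]
    (Y : Ω → ℝ) (p t : ℝ) (hb : ∀ ω, Y ω = 0 ∨ Y ω = 1) (hm : Measurable Y)
    (hmean : μ[Y] = p) (ht : |t| ≤ 1) :
    mgf (fun ω => Y ω - p) μ t ≤ Real.exp (p * t ^ 2) := by
  have hint : Integrable Y μ := aux_integrable_of_bounded hm 1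
    (fun ω => by rcases hb ω with h | h <;> rw [h] <;> norm_num)
  have hp0 : 0 ≤ p := by
    rw [← hmean]
    exact integral_nonneg fun ω => by rcases hb ω with h | h <;> rw [h] <;> norm_num
  have key : ∀ ω, Real.exp (t * (Y ω - p))
      = Real.exp (-(t * p)) * (1 + (Real.exp t - 1) * Y ω) := by
    intro ω
    rcases hb ω with h | h <;> rw [h] <;>
      [skip; rw [show (1:ℝ) + (Real.exp t - 1) * 1 = Real.exp t by ring, ← Real.exp_add]] <;>
      simp <;> ring_nf
  have hmgf : mgf (fun ω => Y ω - p) μ t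
      = Real.exp (-(t * p)) * (1 + (Real.exp t - 1) * p) := by
    rw [mgf]
    simp only [key]
    rw [integral_const_mul, integral_add (integrable_const 1) (hint.const_mul _),
      integral_const, integral_const_mul, hmean]
    simp
  rw [hmgf]
  calc Real.exp (-(t * p)) * (1 + (Real.exp t - 1) * p)
      ≤ Real.exp (-(t * p)) * Real.exp ((Real.exp t - 1) * p) := by
        gcongr
        exact Real.add_one_le_exp _ |>.trans_eq' (by ring)
    _ = Real.exp (p * (Real.exp t - 1 - t)) := by rw [← Real.exp_add]; ring_nf
    _ ≤ Real.exp (p * t ^ 2) := by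
        apply Real.exp_le_exp.mpr
        have := aux_exp_quad ht
        nlinarith

lemma sum_mgf {Ω : Type} [MeasurableSpace Ω] (μ : Measure Ω) [IsProbabilityMeasure μ]
    (X : ℕ → Ω → ℝ) (p : ℝ)
    (hmeas : ∀ i, Measurable (X i))
    (hindep : iIndepFun X μ)
    (hber : ∀ i, ∀ ω, X i ω = 0 ∨ X i ω = 1)
    (hmean : ∀ i, μ[X i] = p) (n : ℕ) {t : ℝ} (ht : |t| ≤ 1) :
    mgf (fun ω => (∑ i ∈ Finset.range n, X i ω) - n*p) μ t ≤ Real.exp (n*p*t^2) := by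
  have hY : ∀ i : ℕ, Measurable (fun ω => X i ω - p) :=
    fun i => (hmeas i).sub measurable_const
  have hYindep : iIndepFun (fun i => fun ω => X i ω - p) μ :=
    hindep.comp (fun _ x => x - p) (fun _ => measurable_id.sub measurable_const)
  have hsum : (∑ i ∈ Finset.range n, fun ω => X i ω - p)
      = fun ω => (∑ i ∈ Finset.range n, X i ω) - n*p := by
    funext ω
    rw [Finset.sum_apply]
    rw [Finset.sum_sub_distrib, Finset.sum_const, Finset.card_range, nsmul_eq_mul]
  calc mgf (fun ω => (∑ i ∈ Finset.range n, X i ω) - n*p) μ t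
      = ∏ i ∈ Finset.range n, mgf (fun ω => X i ω - p) μ t := by
        rw [← hsum, hYindep.mgf_sum hY]
    _ ≤ ∏ _i ∈ Finset.range n, Real.exp (p * t ^ 2) := by
        apply Finset.prod_le_prod (fun i _ => mgf_nonneg)
        exact fun i _ => bern_mgf μ (X i) p t (hber i) (hmeas i) (hmean i) ht
    _ = Real.exp (n*p*t^2) := by
        rw [Finset.prod_const, Finset.card_range, ← Real.exp_nat_mul]
        ring_nf

end Helpers

/-- Anytime empirical-Bernstein concentration for i.i.d. Bernoulli variables:
with probability at least 1 − δ, simultaneously for all n ≥ 1 the empirical mean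
is within the data-dependent radius of the true mean. -/
theorem anytime_empirical_bernstein
    {Ω : Type} [MeasurableSpace Ω] (μ : Measure Ω) [IsProbabilityMeasure μ]
    (X : ℕ → Ω → ℝ) (p : ℝ) (δ : ℝ) (hδ : δ ∈ Set.Ioo (0 : ℝ) 1)
    (hmeas : ∀ i, Measurable (X i))
    (hindep : iIndepFun X μ)
    (hber : ∀ i, ∀ ω, X i ω = 0 ∨ X i ω = 1)
    (hmean : ∀ i, μ[X i] = p) :
    ENNReal.ofReal (1 - δ) ≤
      μ {ω | ∀ n : ℕ, 1 ≤ n →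
        |(∑ i ∈ Finset.range n, X i ω) / n - p| ≤
          Real.sqrt (18 * ((∑ i ∈ Finset.range n, X i ω) / n) * Real.log (6 * n / δ) / n)
            + 18 * Real.log (6 * n / δ) / n} := by
  obtain ⟨hδ0, hδ1⟩ := hδ
  have hX0 : ∀ i ω, 0 ≤ X i ω := fun i ω => by rcases hber i ω with h | h <;> rw [h] <;> norm_num
  have hX1 : ∀ i ω, X i ω ≤ 1 := fun i ω => by rcases hber i ω with h | h <;> rw [h] <;> norm_num
  have hXint : ∀ i, Integrable (X i) μ := fun i =>
    aux_integrable_of_bounded (hmeas i) 1 (fun ω => abs_le.mpr ⟨by linarith [hX0 i ω], hX1 i ω⟩)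
  have hp0 : 0 ≤ p := by
    rw [← hmean 0]; exact integral_nonneg fun ω => hX0 0 ω
  have hp1 : p ≤ 1 := by
    rw [← hmean 0]
    have h := integral_mono (f := X 0) (g := fun _ => (1:ℝ)) (hXint 0) (integrable_const 1)
      (fun ω => hX1 0 ω)
    simpa using h
  -- notation
  set S : ℕ → Ω → ℝ := fun n ω => ∑ i ∈ Finset.range n, X i ω with hSdef
  have hSmeas : ∀ n, Measurable (S n) := fun n => Finset.measurable_sum _ (fun i _ => hmeas i)
  have hS0 : ∀ n ω, 0 ≤ S n ω := fun n ω => Finset.sum_nonneg (fun i _ => hX0 i ω)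
  have hS1 : ∀ n ω, S n ω ≤ n := fun n ω => by
    calc S n ω ≤ ∑ _i ∈ Finset.range n, (1:ℝ) := Finset.sum_le_sum (fun i _ => hX1 i ω)
      _ = n := by simp
  set L : ℕ → ℝ := fun n => Real.log (6*n/δ) with hLdef
  set xx : ℕ → ℝ := fun n => 2 * L n with hxxdef
  set T : ℕ → ℝ := fun n => Real.sqrt (4*n*p*(xx n)) + 2*(xx n) with hTdef
  -- per-n facts
  have hL : ∀ n : ℕ, 1 ≤ n → 0 < L n := by
    intro n hn
    apply Real.log_pos
    rw [lt_div_iff₀ hδ0]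
    have : (1:ℝ) ≤ n := by exact_mod_cast hn
    nlinarith
  -- per-n tail bound
  have tail : ∀ n : ℕ, 1 ≤ n →
      μ ({ω | T n ≤ S n ω - (n:ℝ)*p} ∪ {ω | T n ≤ (n:ℝ)*p - S n ω})
        ≤ ENNReal.ofReal (δ/(18*(n:ℝ)^2)) := by
    intro n hn
    have hn1 : (1:ℝ) ≤ n := by exact_mod_cast hn
    have hLn := hL n hn
    have hxpos : 0 < xx n := by simp only [hxxdef]; linarith
    have ha0 : 0 ≤ (n:ℝ)*p := by positivity
    set a : ℝ := (n:ℝ)*p with hadef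
    set lam : ℝ := Real.sqrt (xx n / (a + xx n)) with hlamdef
    have hapx : 0 < a + xx n := by linarith
    have hlam0 : 0 ≤ lam := Real.sqrt_nonneg _
    have hlam1 : lam ≤ 1 := by
      apply aux_sqrt_le (by norm_num)
      rw [one_pow, div_le_one hapx]; linarith
    have hlamabs : |lam| ≤ 1 := by rw [abs_of_nonneg hlam0]; exact hlam1
    have hlamsq : lam^2 = xx n / (a + xx n) := Real.sq_sqrt (by positivity)
    -- exponent bound
    have hexp : -lam * T n + a * lam^2 ≤ -(xx n) := by
      have h1 : a * lam^2 ≤ xx n := by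
        rw [hlamsq, mul_div_assoc', div_le_iff₀ hapx]
        nlinarith
      have h2 : 2 * xx n ≤ lam * T n := by
        set u : ℝ := Real.sqrt a with hudef
        set v : ℝ := Real.sqrt (xx n) with hvdef
        set w : ℝ := Real.sqrt (a + xx n) with hwdef
        have hu : u^2 = a := Real.sq_sqrt ha0
        have hv : v^2 = xx n := Real.sq_sqrt hxpos.le
        have hwpos : 0 < w := Real.sqrt_pos.mpr hapx
        have hw_le : w ≤ u + v := aux_sqrt_add ha0 hxpos.le
        have hv0 : 0 ≤ v := Real.sqrt_nonneg _
        have hu0 : 0 ≤ u := Real.sqrt_nonneg _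
        have hlam_eq : lam = v / w := by
          rw [hlamdef, Real.sqrt_div hxpos.le]
        have h2uv : Real.sqrt (4*(n:ℝ)*p*(xx n)) = 2*u*v := by
          have e : (4:ℝ)*(n:ℝ)*p*(xx n) = (2*u*v)^2 := by
            have e2 : (2*u*v)^2 = 4*(u^2)*(v^2) := by ring
            rw [e2, hu, hv, hadef]; ring
          rw [e]
          exact Real.sqrt_sq (by positivity)
        have hT_eq : T n = 2*u*v + 2*(xx n) := by
          rw [hTdef]; simp only []; rw [h2uv]
        rw [hT_eq, hlam_eq, div_mul_eq_mul_div, le_div_iff₀ hwpos]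
        nlinarith [mul_le_mul_of_nonneg_left hw_le (show (0:ℝ) ≤ 2*v^2 by positivity)]
      linarith
    -- integrability
    have hintS : Integrable (fun ω => Real.exp (lam * (S n ω - (n:ℝ)*p))) μ := by
      apply aux_integrable_of_bounded
        ((((hSmeas n).sub measurable_const).const_mul lam).exp) (Real.exp (2*(n:ℝ)))
      intro ω
      rw [abs_of_pos (Real.exp_pos _)]
      apply Real.exp_le_exp.mpr
      have h1 : |S n ω - (n:ℝ)*p| ≤ 2*(n:ℝ) := by
        rw [abs_le]; constructor <;> nlinarith [hS0 n ω, hS1 n ω, hn1, hp0, hp1]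
      calc lam * (S n ω - (n:ℝ)*p) ≤ |lam * (S n ω - (n:ℝ)*p)| := le_abs_self _
        _ = |lam| * |S n ω - (n:ℝ)*p| := abs_mul _ _
        _ ≤ 1 * (2*(n:ℝ)) := mul_le_mul hlamabs h1 (abs_nonneg _) zero_le_one
        _ = 2*(n:ℝ) := one_mul _
    have hintS' : Integrable (fun ω => Real.exp (lam * ((n:ℝ)*p - S n ω))) μ := by
      apply aux_integrable_of_bounded
        (((measurable_const.sub (hSmeas n)).const_mul lam).exp) (Real.exp (2*(n:ℝ)))
      intro ω
      rw [abs_of_pos (Real.exp_pos _)]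
      apply Real.exp_le_exp.mpr
      have h1 : |(n:ℝ)*p - S n ω| ≤ 2*(n:ℝ) := by
        rw [abs_le]; constructor <;> nlinarith [hS0 n ω, hS1 n ω, hn1, hp0, hp1]
      calc lam * ((n:ℝ)*p - S n ω) ≤ |lam * ((n:ℝ)*p - S n ω)| := le_abs_self _
        _ = |lam| * |(n:ℝ)*p - S n ω| := abs_mul _ _
        _ ≤ 1 * (2*(n:ℝ)) := mul_le_mul hlamabs h1 (abs_nonneg _) zero_le_one
        _ = 2*(n:ℝ) := one_mul _
    -- mgf bounds
    have hmgfS : mgf (fun ω => S n ω - (n:ℝ)*p) μ lam ≤ Real.exp (a*lam^2) := by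
      rw [hadef]
      exact sum_mgf μ X p hmeas hindep hber hmean n hlamabs
    have hmgfS' : mgf (fun ω => (n:ℝ)*p - S n ω) μ lam ≤ Real.exp (a*lam^2) := by
      have he : (fun ω => (n:ℝ)*p - S n ω) = -(fun ω => S n ω - (n:ℝ)*p) := by
        funext ω; simp
      rw [he, mgf_neg, hadef]
      have := sum_mgf μ X p hmeas hindep hber hmean n (t := -lam) (by rwa [abs_neg])
      simpa using this
    -- Chernoff both tails
    have hbound : ∀ (Z : Ω → ℝ), Integrable (fun ω => Real.exp (lam * Z ω)) μ →
        mgf Z μ lam ≤ Real.exp (a*lam^2) →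
        μ {ω | T n ≤ Z ω} ≤ ENNReal.ofReal (Real.exp (-(xx n))) := by
      intro Z hint hmgf
      have hch := measure_ge_le_exp_mul_mgf (μ := μ) (X := Z) (T n) hlam0 hint
      rw [← ENNReal.ofReal_toReal (measure_ne_top μ {ω | T n ≤ Z ω})]
      apply ENNReal.ofReal_le_ofReal
      calc (μ {ω | T n ≤ Z ω}).toReal
          ≤ Real.exp (-lam * T n) * mgf Z μ lam := hch
        _ ≤ Real.exp (-lam * T n) * Real.exp (a*lam^2) := by
            gcongr
        _ = Real.exp (-lam * T n + a*lam^2) := (Real.exp_add _ _).symm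
        _ ≤ Real.exp (-(xx n)) := Real.exp_le_exp.mpr hexp
    have hA := hbound _ hintS hmgfS
    have hB := hbound _ hintS' hmgfS'
    -- numeric value of exp(-(xx n))
    have hval : Real.exp (-(xx n)) = (δ/(6*(n:ℝ)))^2 := by
      have hu : (0:ℝ) < 6*(n:ℝ)/δ := by positivity
      have hLe : L n = Real.log (6*(n:ℝ)/δ) := by rw [hLdef]
      have e1 : -(xx n) = (-L n) + (-L n) := by rw [hxxdef]; ring
      rw [e1, Real.exp_add, hLe, Real.exp_neg, Real.exp_log hu, inv_div]
      ring
    calc μ ({ω | T n ≤ S n ω - (n:ℝ)*p} ∪ {ω | T n ≤ (n:ℝ)*p - S n ω})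
        ≤ μ {ω | T n ≤ S n ω - (n:ℝ)*p} + μ {ω | T n ≤ (n:ℝ)*p - S n ω} :=
          measure_union_le _ _
      _ ≤ ENNReal.ofReal (Real.exp (-(xx n))) + ENNReal.ofReal (Real.exp (-(xx n))) :=
          add_le_add hA hB
      _ = ENNReal.ofReal (2 * Real.exp (-(xx n))) := by
          rw [← ENNReal.ofReal_add (Real.exp_pos _).le (Real.exp_pos _).le]; ring_nf
      _ ≤ ENNReal.ofReal (δ/(18*(n:ℝ)^2)) := by
          apply ENNReal.ofReal_le_ofReal
          rw [hval]
          have hn0 : (0:ℝ) < n := by linarith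
          have hd : δ^2 ≤ δ := by nlinarith
          calc 2 * (δ/(6*(n:ℝ)))^2 = δ^2/(18*(n:ℝ)^2) := by
                rw [div_pow]; field_simp; ring
            _ ≤ δ/(18*(n:ℝ)^2) := by gcongr

  -- the bad event
  set Bad : ℕ → Set Ω := fun m =>
    {ω | T (m+1) ≤ S (m+1) ω - ((m+1:ℕ):ℝ)*p} ∪ {ω | T (m+1) ≤ ((m+1:ℕ):ℝ)*p - S (m+1) ω}
    with hBaddef
  have hBadMeas : ∀ m, MeasurableSet (Bad m) := by
    intro m
    apply MeasurableSet.union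
    · exact measurableSet_le measurable_const ((hSmeas _).sub measurable_const)
    · exact measurableSet_le measurable_const (measurable_const.sub (hSmeas _))
  have hU : μ (⋃ m, Bad m) ≤ ENNReal.ofReal δ := by
    calc μ (⋃ m, Bad m) ≤ ∑' m, μ (Bad m) := measure_iUnion_le _
      _ ≤ ∑' m : ℕ, ENNReal.ofReal (δ/(18*((m:ℝ)+1)^2)) := by
          apply ENNReal.tsum_le_tsum
          intro m
          have := tail (m+1) (by omega)
          rw [hBaddef]
          convert this using 4 <;> push_cast <;> ring
      _ ≤ ENNReal.ofReal δ := by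
          rw [ENNReal.tsum_eq_iSup_nat]
          apply iSup_le
          intro N
          rw [← ENNReal.ofReal_sum_of_nonneg (fun i _ => by positivity)]
          apply ENNReal.ofReal_le_ofReal
          have hbas := partial_basel' N
          have he : ∑ m ∈ Finset.range N, δ/(18*((m:ℝ)+1)^2)
              = (δ/18) * ∑ m ∈ Finset.range N, 1/((m:ℝ)+1)^2 := by
            rw [Finset.mul_sum]
            refine Finset.sum_congr rfl fun m _ => ?_
            rw [mul_one_div, div_div]
          rw [he]
          nlinarith
  -- complement of bad event is contained in the target set
  have hsub : (⋃ m, Bad m)ᶜ ⊆ {ω | ∀ n : ℕ, 1 ≤ n →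
      |(∑ i ∈ Finset.range n, X i ω) / n - p| ≤
        Real.sqrt (18 * ((∑ i ∈ Finset.range n, X i ω) / n) * Real.log (6 * n / δ) / n)
          + 18 * Real.log (6 * n / δ) / n} := by
    intro ω hω
    simp only [Set.mem_compl_iff, Set.mem_iUnion, not_exists, hBaddef, Set.mem_union,
      Set.mem_setOf_eq, not_or, not_le] at hω
    intro n hn
    obtain ⟨m, rfl⟩ : ∃ m, n = m + 1 := ⟨n - 1, by omega⟩
    obtain ⟨hω1, hω2⟩ := hω m
    set n := m + 1 with hndef
    have hn1 : (1:ℝ) ≤ (n:ℝ) := by exact_mod_cast hn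
    have hnpos : (0:ℝ) < (n:ℝ) := by linarith
    have hLn := hL n hn
    have habsS : |S n ω - (n:ℝ)*p| ≤ T n := abs_le.mpr ⟨by linarith, by linarith⟩
    set q : ℝ := S n ω / n with hqdef
    set s : ℝ := L n / n with hsdef
    have hq0 : 0 ≤ q := by
      rw [hqdef]; exact div_nonneg (hS0 n ω) hnpos.le
    have hs0 : 0 ≤ s := by
      rw [hsdef]; positivity
    have hxeq : xx n = 2 * L n := by rw [hxxdef]
    have hsqrt_eq : Real.sqrt (4*(n:ℝ)*p*(xx n)) = (n:ℝ) * Real.sqrt (8*p*s) := by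
      have e : (4:ℝ)*(n:ℝ)*p*(xx n) = (n:ℝ)^2 * (8*p*s) := by
        rw [hxeq, hsdef]; field_simp; ring
      rw [e, Real.sqrt_mul (sq_nonneg _), Real.sqrt_sq hnpos.le]
    have hTn : T n / n = Real.sqrt (8*p*s) + 4*s := by
      rw [hTdef]
      simp only []
      rw [hsqrt_eq, hxeq, hsdef]
      field_simp
      ring
    have habs : |q - p| ≤ Real.sqrt (8*p*s) + 4*s := by
      have e : q - p = (S n ω - (n:ℝ)*p) / n := by
        rw [hqdef]; field_simp
      rw [e, abs_div, abs_of_pos hnpos, ← hTn]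
      gcongr
    have hconv := conv_lemma hp0 hq0 hs0 habs
    have hgoal_rw1 : (18:ℝ) * q * Real.log (6 * (n:ℝ) / δ) / (n:ℝ) = 18*q*s := by
      rw [hsdef, hLdef]; ring
    have hgoal_rw2 : (18:ℝ) * Real.log (6 * (n:ℝ) / δ) / (n:ℝ) = 18*s := by
      rw [hsdef, hLdef]; ring
    calc |(∑ i ∈ Finset.range n, X i ω) / (n:ℝ) - p| = |q - p| := by rw [hqdef]
      _ ≤ Real.sqrt (18*q*s) + 18*s := hconv
      _ = Real.sqrt (18 * ((∑ i ∈ Finset.range n, X i ω) / (n:ℝ)) * Real.log (6 * (n:ℝ) / δ) / (n:ℝ))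
            + 18 * Real.log (6 * (n:ℝ) / δ) / (n:ℝ) := by
          rw [hgoal_rw1, hgoal_rw2, hqdef]
  -- conclude
  have hUmeas : MeasurableSet (⋃ m, Bad m) := MeasurableSet.iUnion hBadMeas
  calc ENNReal.ofReal (1 - δ) ≤ 1 - ENNReal.ofReal δ := by
        rw [← ENNReal.ofReal_one, ← ENNReal.ofReal_sub _ hδ0.le]
    _ ≤ 1 - μ (⋃ m, Bad m) := tsub_le_tsub_left hU 1
    _ = μ ((⋃ m, Bad m)ᶜ) := (prob_compl_eq_one_sub hUmeas).symm
    _ ≤ _ := measure_mono hsub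
end
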